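/- Let m ≥ 1 and let b_1,…,b_m > 0 satisfy b_i > Σ_{j=i+1}^m b_j for every 1 ≤ i ≤ m − 1. Let 2 ≤ k ≤ 2^m. If y ∈ ℝ^m is such that for every integer j with k ≤ j ≤ 2^m there exists an index i ∈ {1,…,m} with y_i ≡ π·τ_i(j) (mod 2π), then Σ_{i=1}^m b_i cos(y_i) ≤ β(k − 1). -/

import Mathlib

open Finset

/-- τ_i(k): the i-th binary digit of k−1, i.e. k − 1 = Σ_{i=1}^m τ_i(k)·2^{m−i}. -/
def tauD (m k i : ℕ) : ℕ := ((k - 1) / 2 ^ (m - i)) % 2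

/-- β(k) = Σ_{i=1}^m (−1)^{1−τ_i(k)} b_i. -/
noncomputable def betaD (m : ℕ) (b : ℕ → ℝ) (k : ℕ) : ℝ :=
  ∑ i ∈ Finset.Icc 1 m, (if tauD m k i = 1 then b i else -b i)


def dig (m p i : ℕ) : ℕ := (p / 2 ^ (m - i)) % 2

lemma dig_zero_or_one (m p i : ℕ) : dig m p i = 0 ∨ dig m p i = 1 := Nat.mod_two_eq_zero_or_one _

lemma dig_of_zero (m i : ℕ) : dig m 0 i = 0 := by simp [dig]

lemma dig_tail {m p i : ℕ} (h2 : 2 ≤ i) (him : i ≤ m + 1) :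
    dig (m + 1) p i = dig m (p % 2 ^ m) (i - 1) := by
  unfold dig
  have he : m - (i - 1) = m + 1 - i := by omega
  rw [he]
  set e := m + 1 - i with hee
  have hlt : e < m := by omega
  have hsplit : p = p % 2 ^ m + 2 ^ (m - e) * (p / 2 ^ m) * 2 ^ e := by
    have h1 : 2 ^ (m - e) * (p / 2 ^ m) * 2 ^ e = 2 ^ m * (p / 2 ^ m) := by
      rw [mul_right_comm, ← pow_add, show m - e + e = m by omega]
    rw [h1]
    exact (Nat.mod_add_div p (2 ^ m)).symm
  conv_lhs => rw [hsplit]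
  rw [Nat.add_mul_div_right _ _ (by positivity : 0 < 2 ^ e)]
  have hev : (2 ^ (m - e) * (p / 2 ^ m)) % 2 = 0 := by
    have hd : m - e = (m - e - 1) + 1 := by omega
    rw [hd, pow_succ]
    rw [mul_right_comm]
    exact Nat.mul_mod_left _ _
  omega

lemma dig_one_high {m q : ℕ} (h1 : 2 ^ m ≤ q) (h2 : q < 2 ^ (m + 1)) : dig (m + 1) q 1 = 1 := by
  unfold dig
  have he : m + 1 - 1 = m := rfl
  rw [he]
  have : q / 2 ^ m = 1 := by
    apply Nat.div_eq_of_lt_le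
    · simpa using h1
    · have : 2 ^ (m+1) = 2 * 2 ^ m := by ring
      omega
  rw [this]

lemma dig_one_low {m q : ℕ} (h1 : q < 2 ^ m) : dig (m + 1) q 1 = 0 := by
  unfold dig
  have he : m + 1 - 1 = m := rfl
  rw [he, Nat.div_eq_of_lt h1]

lemma dig_all_ones {m j : ℕ} (h1 : 1 ≤ j) (hj : j ≤ m) : dig m (2 ^ m - 1) j = 1 := by
  unfold dig
  set e := m - j with hee
  have hlt : e < m := by omega
  set A := 2 ^ e with hA
  set B := 2 ^ (m - e) with hB
  have hApos : 0 < A := (by positivity : 0 < 2 ^ e)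
  have hBpos : 0 < B := (by positivity : 0 < 2 ^ (m - e))
  have hAB : 2 ^ m = B * A := by rw [hB, hA, ← pow_add]; congr 1; omega
  have hALE : A ≤ B * A := Nat.le_mul_of_pos_left A hBpos
  have hBA : (B - 1) * A = B * A - A := Nat.sub_mul B 1 A |>.trans (by rw [one_mul])
  have hdecomp : 2 ^ m - 1 = (A - 1) + (B - 1) * A := by omega
  rw [hdecomp, Nat.add_mul_div_right _ _ hApos, Nat.div_eq_of_lt (by omega)]
  have hBeven : B % 2 = 0 := by
    rw [hB, Nat.pow_mod]
    norm_num
    rw [Nat.zero_pow (show 0 < m - e by omega)]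
  omega

lemma cos_two_pi_shift (x : ℝ) (n : ℤ) : Real.cos (x + 2 * Real.pi * n) = Real.cos x := by
  have h : x + 2 * Real.pi * n = x + n * (2 * Real.pi) := by ring
  rw [h, Real.cos_add_int_mul_two_pi]

lemma cos_dig0 (n : ℤ) : Real.cos (Real.pi * ((0 : ℕ) : ℝ) + 2 * Real.pi * n) = 1 := by
  rw [cos_two_pi_shift]; norm_num

lemma cos_dig1 (n : ℤ) : Real.cos (Real.pi * ((1 : ℕ) : ℝ) + 2 * Real.pi * n) = -1 := by
  rw [cos_two_pi_shift]; norm_num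

lemma cos_pi_shift (n : ℤ) : Real.cos (Real.pi + 2 * Real.pi * n) = -1 := by
  rw [cos_two_pi_shift]; exact Real.cos_pi

lemma cos_eq_neg_one' {x : ℝ} (h : Real.cos x = -1) : ∃ n : ℤ, x = Real.pi + 2 * Real.pi * n := by
  have h2 : Real.cos (x + Real.pi) = 1 := by rw [Real.cos_add_pi, h]; norm_num
  obtain ⟨n, hn⟩ := (Real.cos_eq_one_iff _).1 h2
  exact ⟨n - 1, by push_cast; linarith⟩

lemma pi_shift_ne (n n' : ℤ) : Real.pi + 2 * Real.pi * (n : ℝ) ≠ 2 * Real.pi * (n' : ℝ) := by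
  intro h
  have h2 : ((2 * n' : ℤ) : ℝ) * Real.pi = ((2 * n + 1 : ℤ) : ℝ) * Real.pi := by
    push_cast; linarith
  have h4 : (2 * n' : ℤ) = 2 * n + 1 := by
    exact_mod_cast mul_right_cancel₀ Real.pi_ne_zero h2
  omega

lemma sum_shift (f : ℕ → ℝ) (a c : ℕ) :
    ∑ i ∈ Icc (a + 1) (c + 1), f i = ∑ i ∈ Icc a c, f (i + 1) := by
  rw [← Finset.map_add_right_Icc a c 1, Finset.sum_map]
  rfl

lemma sum_split_first {M : ℕ} (hM : 1 ≤ M) (f : ℕ → ℝ) :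
    ∑ i ∈ Icc 1 M, f i = f 1 + ∑ i ∈ Icc 2 M, f i := by
  have h : Icc 1 M = insert 1 (Icc 2 M) := by
    ext x; simp only [mem_Icc, mem_insert]; omega
  rw [h, Finset.sum_insert (by simp)]

lemma key : ∀ m, 1 ≤ m → ∀ (b y : ℕ → ℝ),
    (∀ i, 1 ≤ i → i ≤ m → 0 < b i) →
    (∀ i, 1 ≤ i → i ≤ m - 1 → (∑ j ∈ Icc (i + 1) m, b j) < b i) →
    ∀ q, q + 1 < 2 ^ m →
    (∀ p, q < p → p < 2 ^ m → ∃ i, 1 ≤ i ∧ i ≤ m ∧ ∃ n : ℤ,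
        y i = Real.pi * (dig m p i : ℝ) + 2 * Real.pi * (n : ℝ)) →
    ∑ i ∈ Icc 1 m, b i * Real.cos (y i) ≤
      ∑ i ∈ Icc 1 m, (if dig m q i = 1 then b i else -b i) := by
  intro m hm
  induction m, hm using Nat.le_induction with
  | base =>
    intro b y hb hdom q hq hy
    have hq0 : q = 0 := by omega
    obtain ⟨i, hi1, hi2, n, hn⟩ := hy 1 (by omega) (by norm_num)
    have hi : i = 1 := by omega
    subst hi hq0
    have hd : dig 1 1 1 = 1 := by norm_num [dig]
    rw [hd] at hn
    have hc : Real.cos (y 1) = -1 := by rw [hn]; exact cos_dig1 n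
    simp only [Finset.Icc_self, Finset.sum_singleton, hc, dig_of_zero]
    norm_num
  | succ m hm IH =>
    intro b y hb hdom q hq hy
    have hdbl : (2:ℕ) ^ (m + 1) = 2 * 2 ^ m := by ring
    have hpow1 : (1:ℕ) < 2 ^ m := by
      have h2 : (2:ℕ) ^ 1 ≤ 2 ^ m := Nat.pow_le_pow_right (by norm_num) hm
      omega
    have hm1 : (1:ℕ) ≤ m + 1 := by omega
    have hb1 : 0 < b 1 := hb 1 le_rfl (by omega)
    have hB2lt : ∑ j ∈ Icc 2 (m + 1), b j < b 1 := by
      have h := hdom 1 le_rfl (by omega)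
      simpa using h
    rw [sum_split_first hm1 (fun i => b i * Real.cos (y i)),
        sum_split_first hm1 (fun i => if dig (m + 1) q i = 1 then b i else -b i)]
    set B2 : ℝ := ∑ j ∈ Icc 2 (m + 1), b j with hB2
    have hbpos2 : ∀ i ∈ Icc 2 (m + 1), 0 < b i := by
      intro i hi
      simp only [mem_Icc] at hi
      exact hb i (by omega) hi.2
    have htail_le : ∑ i ∈ Icc 2 (m + 1), b i * Real.cos (y i) ≤ B2 := by
      apply Finset.sum_le_sum
      intro i hi
      exact mul_le_of_le_one_right (le_of_lt (hbpos2 i hi)) (Real.cos_le_one _)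
    set T : ℝ := ∑ i ∈ Icc 2 (m + 1), (if dig (m + 1) q i = 1 then b i else -b i) with hT
    have hT_ge : -B2 ≤ T := by
      rw [hT, hB2, ← Finset.sum_neg_distrib]
      apply Finset.sum_le_sum
      intro i hi
      split
      · have := hbpos2 i hi; linarith
      · exact le_rfl
    -- reusable tail induction hypothesis
    have htailIH : ∀ q' : ℕ, q' + 1 < 2 ^ m →
        (∀ p', q' < p' → p' < 2 ^ m → ∃ i, 2 ≤ i ∧ i ≤ m + 1 ∧ ∃ n : ℤ,
            y i = Real.pi * (dig m p' (i - 1) : ℝ) + 2 * Real.pi * (n : ℝ)) →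
        ∑ i ∈ Icc 2 (m + 1), b i * Real.cos (y i) ≤
          ∑ i ∈ Icc 2 (m + 1), (if dig m q' (i - 1) = 1 then b i else -b i) := by
      intro q' hq' hcon
      have hdom' : ∀ i, 1 ≤ i → i ≤ m - 1 →
          (∑ j ∈ Icc (i + 1) m, b (j + 1)) < b (i + 1) := by
        intro i h1 h2
        have h3 : ∑ j ∈ Icc (i + 1 + 1) (m + 1), b j < b (i + 1) :=
          hdom (i + 1) (by omega) (by omega)
        have h4 : ∑ j ∈ Icc (i + 1 + 1) (m + 1), b j = ∑ j ∈ Icc (i + 1) m, b (j + 1) :=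
          sum_shift b (i + 1) m
        linarith
      have h1 := IH (fun i => b (i + 1)) (fun i => y (i + 1))
        (fun i hi1 hi2 => hb (i + 1) (by omega) (by omega))
        hdom' q' hq'
        (fun p' hp1 hp2 => by
          obtain ⟨i, hi2, him, n, hn⟩ := hcon p' hp1 hp2
          refine ⟨i - 1, by omega, by omega, n, ?_⟩
          have he : i - 1 + 1 = i := by omega
          show y (i - 1 + 1) = _
          rw [he]
          exact hn)
      have e1 : ∑ i ∈ Icc 2 (m + 1), b i * Real.cos (y i)
          = ∑ i ∈ Icc 1 m, b (i + 1) * Real.cos (y (i + 1)) := by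
        simpa using sum_shift (fun i => b i * Real.cos (y i)) 1 m
      have e2 : ∑ i ∈ Icc 2 (m + 1), (if dig m q' (i - 1) = 1 then b i else -b i)
          = ∑ i ∈ Icc 1 m, (if dig m q' i = 1 then b (i + 1) else -b (i + 1)) := by
        simpa using sum_shift (fun i => if dig m q' (i - 1) = 1 then b i else -b i) 1 m
      rw [e1, e2]
      exact h1
    by_cases hA : ∃ n : ℤ, y 1 = Real.pi + 2 * Real.pi * (n : ℝ)
    · obtain ⟨n0, hn0⟩ := hA
      have hc1 : Real.cos (y 1) = -1 := by rw [hn0]; exact cos_pi_shift n0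
      rw [hc1]
      by_cases hd : 2 ^ m ≤ q
      · -- first digit 1, y 1 ≡ π : crude bound
        have hdig1 : dig (m + 1) q 1 = 1 := dig_one_high hd (by omega)
        rw [if_pos hdig1]
        linarith
      · -- first digit 0, y 1 ≡ π
        have hdig1 : dig (m + 1) q 1 = 0 := dig_one_low (by omega)
        rw [if_neg (by simp [hdig1])]
        have htail : ∑ i ∈ Icc 2 (m + 1), b i * Real.cos (y i) ≤ T := by
          by_cases hq' : q + 1 < 2 ^ m
          · have hcon : ∀ p', q < p' → p' < 2 ^ m → ∃ i, 2 ≤ i ∧ i ≤ m + 1 ∧ ∃ n : ℤ,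
                y i = Real.pi * (dig m p' (i - 1) : ℝ) + 2 * Real.pi * (n : ℝ) := by
              intro p' hp1 hp2
              obtain ⟨i, hi1, hi2, n, hn⟩ := hy p' hp1 (by omega)
              rcases Nat.lt_or_ge i 2 with hi | hi
              · exfalso
                have hieq : i = 1 := by omega
                subst hieq
                rw [dig_one_low hp2] at hn
                refine pi_shift_ne n0 n ?_
                rw [← hn0, hn]
                push_cast
                ring
              · refine ⟨i, hi, hi2, n, ?_⟩
                rw [dig_tail hi hi2, Nat.mod_eq_of_lt hp2] at hn
                exact hn
            have h2 := htailIH q hq' hcon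
            have hTeq : T = ∑ i ∈ Icc 2 (m + 1), (if dig m q (i - 1) = 1 then b i else -b i) := by
              rw [hT]
              apply Finset.sum_congr rfl
              intro i hi
              simp only [mem_Icc] at hi
              rw [dig_tail (by omega) hi.2, Nat.mod_eq_of_lt (by omega)]
            rw [hTeq]
            exact h2
          · -- q = 2^m - 1 : all tail digits of q are 1, T = B2
            have hTeq : T = B2 := by
              rw [hT, hB2]
              apply Finset.sum_congr rfl
              intro i hi
              simp only [mem_Icc] at hi
              rw [dig_tail (by omega) hi.2, Nat.mod_eq_of_lt (by omega),
                show q = 2 ^ m - 1 by omega, dig_all_ones (by omega) (by omega)]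
              norm_num
            rw [hTeq]
            exact htail_le
        linarith
    · -- y 1 is never ≡ π : witnesses of high patterns are in the tail
      have hwit1 : ∀ p, q < p → p < 2 ^ (m + 1) → 2 ^ m ≤ p → ∃ i, 2 ≤ i ∧ i ≤ m + 1 ∧ ∃ n : ℤ,
          y i = Real.pi * (dig (m + 1) p i : ℝ) + 2 * Real.pi * (n : ℝ) := by
        intro p hp1 hp2 hp3
        obtain ⟨i, hi1, hi2, n, hn⟩ := hy p hp1 hp2
        rcases Nat.lt_or_ge i 2 with hi | hi
        · exfalso
          have hieq : i = 1 := by omega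
          subst hieq
          rw [dig_one_high hp3 hp2] at hn
          exact hA ⟨n, by rw [hn]; push_cast; ring⟩
        · exact ⟨i, hi, hi2, n, hn⟩
      by_cases hd : 2 ^ m ≤ q
      · -- first digit 1, y 1 not ≡ π
        have hdig1 : dig (m + 1) q 1 = 1 := dig_one_high hd (by omega)
        rw [if_pos hdig1]
        have hq'mod : q % 2 ^ m = q - 2 ^ m := by
          rw [Nat.mod_eq_sub_mod hd, Nat.mod_eq_of_lt (by omega)]
        have hcon : ∀ p', q - 2 ^ m < p' → p' < 2 ^ m → ∃ i, 2 ≤ i ∧ i ≤ m + 1 ∧ ∃ n : ℤ,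
            y i = Real.pi * (dig m p' (i - 1) : ℝ) + 2 * Real.pi * (n : ℝ) := by
          intro p' hp1 hp2
          obtain ⟨i, hi2, him, n, hn⟩ := hwit1 (p' + 2 ^ m) (by omega) (by omega) (by omega)
          refine ⟨i, hi2, him, n, ?_⟩
          rw [dig_tail hi2 him, Nat.add_mod_right, Nat.mod_eq_of_lt hp2] at hn
          exact hn
        have h2 := htailIH (q - 2 ^ m) (by omega) hcon
        have hTeq : T = ∑ i ∈ Icc 2 (m + 1), (if dig m (q - 2 ^ m) (i - 1) = 1 then b i else -b i) := by
          rw [hT]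
          apply Finset.sum_congr rfl
          intro i hi
          simp only [mem_Icc] at hi
          rw [dig_tail (by omega) hi.2, hq'mod]
        have hfirst : b 1 * Real.cos (y 1) ≤ b 1 :=
          mul_le_of_le_one_right hb1.le (Real.cos_le_one _)
        rw [hTeq]
        linarith
      · -- first digit 0, y 1 not ≡ π : contradiction
        exfalso
        have hcon0 : ∀ p', 0 < p' → p' < 2 ^ m → ∃ i, 2 ≤ i ∧ i ≤ m + 1 ∧ ∃ n : ℤ,
            y i = Real.pi * (dig m p' (i - 1) : ℝ) + 2 * Real.pi * (n : ℝ) := by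
          intro p' hp1 hp2
          obtain ⟨i, hi2, him, n, hn⟩ := hwit1 (p' + 2 ^ m) (by omega) (by omega) (by omega)
          refine ⟨i, hi2, him, n, ?_⟩
          rw [dig_tail hi2 him, Nat.add_mod_right, Nat.mod_eq_of_lt hp2] at hn
          exact hn
        have htail := htailIH 0 (by omega) hcon0
        have hnegsum : ∑ j ∈ Icc 2 (m + 1), (-b j) = -B2 := by
          rw [hB2, Finset.sum_neg_distrib]
        have hT0 : ∑ i ∈ Icc 2 (m + 1), (if dig m 0 (i - 1) = 1 then b i else -b i) = -B2 := by
          rw [← hnegsum]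
          apply Finset.sum_congr rfl
          intro i hi
          rw [dig_of_zero]
          norm_num
        have hpt : ∀ i ∈ Icc 2 (m + 1), Real.cos (y i) = -1 := by
          intro i hi
          by_contra hne
          have hterm : ∀ j ∈ Icc 2 (m + 1), -b j ≤ b j * Real.cos (y j) := by
            intro j hj
            have hj2 := hbpos2 j hj
            nlinarith [Real.neg_one_le_cos (y j)]
          have hstrict : -b i < b i * Real.cos (y i) := by
            have hi2 := hbpos2 i hi
            have hgt : -1 < Real.cos (y i) :=
              lt_of_le_of_ne (Real.neg_one_le_cos (y i)) (Ne.symm hne)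
            nlinarith
          have hlt := Finset.sum_lt_sum hterm ⟨i, hi, hstrict⟩
          rw [hnegsum] at hlt
          rw [hT0] at htail
          linarith
        obtain ⟨i, hi2, him, n, hn⟩ := hwit1 (2 ^ m) (by omega) (by omega) le_rfl
        have hdigi : dig (m + 1) (2 ^ m) i = 0 := by
          rw [dig_tail hi2 him, Nat.mod_self, dig_of_zero]
        rw [hdigi] at hn
        have hci := hpt i (by simp only [mem_Icc]; omega)
        obtain ⟨n', hn'⟩ := cos_eq_neg_one' hci
        exact pi_shift_ne n' n (by rw [← hn', hn]; push_cast; ring)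

theorem stmt_18 (m : ℕ) (hm : 1 ≤ m) (b : ℕ → ℝ)
    (hb : ∀ i, 1 ≤ i → i ≤ m → 0 < b i)
    (hdom : ∀ i, 1 ≤ i → i ≤ m - 1 → (∑ j ∈ Finset.Icc (i + 1) m, b j) < b i)
    (k : ℕ) (hk1 : 2 ≤ k) (hk2 : k ≤ 2 ^ m)
    (y : ℕ → ℝ)
    (hy : ∀ j, k ≤ j → j ≤ 2 ^ m → ∃ i, 1 ≤ i ∧ i ≤ m ∧
      ∃ n : ℤ, y i = Real.pi * (tauD m j i : ℝ) + 2 * Real.pi * (n : ℝ)) :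
    ∑ i ∈ Finset.Icc 1 m, b i * Real.cos (y i) ≤ betaD m b (k - 1) := by
  have hcon : ∀ p, k - 2 < p → p < 2 ^ m → ∃ i, 1 ≤ i ∧ i ≤ m ∧ ∃ n : ℤ,
      y i = Real.pi * (dig m p i : ℝ) + 2 * Real.pi * (n : ℝ) := by
    intro p hp1 hp2
    obtain ⟨i, hi1, hi2, n, hn⟩ := hy (p + 1) (by omega) (by omega)
    exact ⟨i, hi1, hi2, n, hn⟩
  have h := key m hm b y hb hdom (k - 2) (by omega) hcon
  unfold betaD
  have he : ∑ i ∈ Finset.Icc 1 m, (if tauD m (k - 1) i = 1 then b i else -b i)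
      = ∑ i ∈ Finset.Icc 1 m, (if dig m (k - 2) i = 1 then b i else -b i) := by
    apply Finset.sum_congr rfl
    intro i _
    have ht : tauD m (k - 1) i = dig m (k - 2) i := by
      unfold tauD dig
      congr 2
    rw [ht]
  rw [he]
  exact h
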